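/- Suppose the following holds: for every topological space G with data (G⁰, r, s) as in the groupoid encoding such that (i) the subtype G⁰ with the subspace topology admits a complete metric inducing that topology, and (ii) G has a countable cover by neighbourhood bisections, effectiveness of G implies that G is topologically principal. Then the Baire Category Theorem holds: for every complete metric space X and every countable collection {C_n} of closed subsets of X each with empty interior, the union ⋃_n C_n has empty interior. -/

import Mathlib

set_option linter.unusedSectionVars false




/-- An open bisection. -/
def IsOpenBisection {G : Type*} [TopologicalSpace G] (r s : G → G) (A : Set G) : Prop :=
  IsOpen A ∧ IsOpen (r '' A) ∧ IsOpen (s '' A) ∧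
  Set.InjOn r A ∧ Set.InjOn s A ∧
  (∀ U ⊆ A, IsOpen U → IsOpen (r '' U)) ∧
  (∀ U ⊆ A, IsOpen U → IsOpen (s '' U))

/-- A neighbourhood bisection. -/
def IsNbhdBisection {G : Type*} [TopologicalSpace G] (G0 : Set G) (r s : G → G)
    (B : Set G) : Prop :=
  B ⊆ closure (interior B) ∧
  Set.InjOn r B ∧ Set.InjOn s B ∧
  IsOpen (r '' B) ∧ IsOpen (s '' B) ∧
  IsOpenBisection r s (interior B) ∧
  B \ interior B ⊆ ({γ | r γ = s γ} ∩ B) \ G0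


universe u

/-- The groupoid: units are points of `X`, and for each `n` and `x ∈ C n` there is one
isotropy arrow at `x`. -/
inductive Gt {X : Type u} (C : ℕ → Set X) : Type u
  | unit : X → Gt C
  | arr : (n : ℕ) → (x : X) → x ∈ C n → Gt C

namespace Gt

variable {X : Type u} {C : ℕ → Set X}

def rmap : Gt C → Gt C
  | .unit x => .unit x
  | .arr _ x _ => .unit x

theorem unit_injective : Function.Injective (unit : X → Gt C) := by
  intro a b h; injection h

variable [TopologicalSpace X]

/-- The openness predicate for the topology on `Gt C`. -/
def GOpen (C : ℕ → Set X) (O : Set (Gt C)) : Prop :=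
  (∀ x : X, unit x ∈ O → ∃ U : Set X, IsOpen U ∧ x ∈ U ∧ ∀ y ∈ U, unit y ∈ O) ∧
  (∀ (n : ℕ) (x : X) (h : x ∈ C n), arr n x h ∈ O → ∃ U : Set X, IsOpen U ∧ x ∈ U ∧
    (∀ y ∈ U, y ∉ C n → unit y ∈ O) ∧ (∀ y, ∀ hy : y ∈ C n, y ∈ U → arr n y hy ∈ O))

instance instTop : TopologicalSpace (Gt C) where
  IsOpen := GOpen C
  isOpen_univ :=
    ⟨fun x _ => ⟨Set.univ, isOpen_univ, trivial, fun _ _ => trivial⟩,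
     fun _ _ _ _ => ⟨Set.univ, isOpen_univ, trivial, fun _ _ _ => trivial, fun _ _ _ => trivial⟩⟩
  isOpen_inter := by
    rintro A B ⟨hA1, hA2⟩ ⟨hB1, hB2⟩
    constructor
    · intro x hx
      obtain ⟨U, hU, hxU, hUA⟩ := hA1 x hx.1
      obtain ⟨V, hV, hxV, hVB⟩ := hB1 x hx.2
      exact ⟨U ∩ V, hU.inter hV, ⟨hxU, hxV⟩, fun y hy => ⟨hUA y hy.1, hVB y hy.2⟩⟩
    · intro n x h hx
      obtain ⟨U, hU, hxU, hUA, hUA'⟩ := hA2 n x h hx.1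
      obtain ⟨V, hV, hxV, hVB, hVB'⟩ := hB2 n x h hx.2
      exact ⟨U ∩ V, hU.inter hV, ⟨hxU, hxV⟩,
        fun y hy hyn => ⟨hUA y hy.1 hyn, hVB y hy.2 hyn⟩,
        fun y hy hyU => ⟨hUA' y hy hyU.1, hVB' y hy hyU.2⟩⟩
  isOpen_sUnion := by
    intro S hS
    constructor
    · rintro x ⟨t, ht, hxt⟩
      obtain ⟨U, hU, hxU, hUt⟩ := (hS t ht).1 x hxt
      exact ⟨U, hU, hxU, fun y hy => ⟨t, ht, hUt y hy⟩⟩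
    · rintro n x h ⟨t, ht, hxt⟩
      obtain ⟨U, hU, hxU, hUt, hUt'⟩ := (hS t ht).2 n x h hxt
      exact ⟨U, hU, hxU, fun y hy hyn => ⟨t, ht, hUt y hy hyn⟩,
        fun y hy hyU => ⟨t, ht, hUt' y hy hyU⟩⟩

theorem isOpen_iff {O : Set (Gt C)} : IsOpen O ↔ GOpen C O := Iff.rfl

theorem continuous_rmap : Continuous (rmap : Gt C → Gt C) := by
  rw [continuous_def]
  intro O hO
  rw [isOpen_iff] at hO ⊢
  constructor
  · intro x hx
    obtain ⟨U, hU, hxU, hUO⟩ := hO.1 x hx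
    exact ⟨U, hU, hxU, fun y hy => hUO y hy⟩
  · intro n x h hx
    obtain ⟨U, hU, hxU, hUO⟩ := hO.1 x hx
    exact ⟨U, hU, hxU, fun y hy _ => hUO y hy, fun y hy hyU => hUO y hyU⟩

theorem continuous_unit : Continuous (unit : X → Gt C) := by
  rw [continuous_def]
  intro O hO
  rw [isOpen_iff] at hO
  rw [isOpen_iff_forall_mem_open]
  intro x hx
  obtain ⟨U, hU, hxU, hUO⟩ := hO.1 x hx
  exact ⟨U, fun y hy => hUO y hy, hU, hxU⟩

theorem isOpenMap_unit : IsOpenMap (unit : X → Gt C) := by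
  intro U hU
  rw [isOpen_iff]
  constructor
  · rintro x ⟨y, hy, hyx⟩
    cases unit_injective hyx
    exact ⟨U, hU, hy, fun z hz => ⟨z, hz, rfl⟩⟩
  · rintro n x h ⟨y, _, hyx⟩
    exact absurd hyx (by simp)

theorem isOpen_range_unit : IsOpen (Set.range (unit : X → Gt C)) := by
  have := isOpenMap_unit (C := C) Set.univ isOpen_univ
  simpa using this
variable {X : Type u} {C : ℕ → Set X} [TopologicalSpace X]

def ux : Gt C → X
  | .unit x => x
  | .arr _ x _ => x

/-- `X` is homeomorphic to the unit space. -/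
def unitHomeo : X ≃ₜ ↥(Set.range (unit : X → Gt C)) where
  toFun x := ⟨unit x, Set.mem_range_self x⟩
  invFun g := ux g.1
  left_inv x := rfl
  right_inv := by rintro ⟨g, x, rfl⟩; rfl
  continuous_toFun := continuous_unit.subtype_mk _
  continuous_invFun := by
    rw [continuous_def]
    intro U hU
    have : (fun g : ↥(Set.range (unit : X → Gt C)) => ux g.1) ⁻¹' U =
        Subtype.val ⁻¹' (unit '' U) := by
      ext ⟨g, x, rfl⟩
      simp only [Set.mem_preimage]
      constructor
      · intro h; exact ⟨x, h, rfl⟩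
      · rintro ⟨y, hy, hyx⟩; cases unit_injective hyx; exact hy
    rw [this]
    exact (isOpenMap_unit U hU).preimage continuous_subtype_val

section Metric
variable {X : Type u} [MetricSpace X] [CompleteSpace X] (C : ℕ → Set X)

theorem exists_metric :
    ∃ m : MetricSpace ↥(Set.range (unit : X → Gt C)),
      m.toUniformSpace.toTopologicalSpace =
        (inferInstance : TopologicalSpace ↥(Set.range (unit : X → Gt C))) ∧
      @CompleteSpace _ m.toUniformSpace := by
  letI m : MetricSpace ↥(Set.range (unit : X → Gt C)) :=
    MetricSpace.induced (unitHomeo (C := C)).symm (unitHomeo (C := C)).symm.injective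
      inferInstance
  refine ⟨m, ?_, ?_⟩
  · have h1 : m.toUniformSpace.toTopologicalSpace =
        TopologicalSpace.induced ((unitHomeo (C := C)).symm)
          UniformSpace.toTopologicalSpace :=
      UniformSpace.toTopologicalSpace_comap
    rw [h1]
    exact (unitHomeo (C := C)).symm.induced_eq
  · exact (IsometryEquiv.mk (unitHomeo (C := C)).symm.toEquiv (fun a b => rfl)).completeSpace

end Metric
section Bsets
variable {X : Type u} [TopologicalSpace X] {C : ℕ → Set X}

def Bset (C : ℕ → Set X) : ℕ → Set (Gt C)
  | 0 => Set.range unit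
  | n + 1 => {g | (∃ x, x ∉ C n ∧ g = unit x) ∨ ∃ x hx, g = arr n x hx}

theorem isOpen_Bset (hC : ∀ n, IsClosed (C n)) : ∀ n, IsOpen (Bset C n)
  | 0 => isOpen_range_unit
  | n + 1 => by
    rw [isOpen_iff]
    constructor
    · rintro x (⟨y, hy, hyx⟩ | ⟨y, hy, hyx⟩)
      · cases unit_injective hyx
        exact ⟨(C n)ᶜ, (hC n).isOpen_compl, hy, fun z hz => Or.inl ⟨z, hz, rfl⟩⟩
      · exact absurd hyx (by simp)
    · rintro m x h (⟨y, hy, hyx⟩ | ⟨y, hy, hyx⟩)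
      · exact absurd hyx (by simp)
      · injection hyx with h1 h2
        subst h1
        exact ⟨Set.univ, isOpen_univ, trivial, fun z _ hz => Or.inl ⟨z, hz, rfl⟩,
          fun z hz _ => Or.inr ⟨z, hz, rfl⟩⟩

theorem rmap_image_Bset : ∀ n, rmap '' Bset C n = Set.range (unit : X → Gt C)
  | 0 => by
    apply Set.Subset.antisymm
    · rintro g ⟨g', _, rfl⟩; cases g' <;> exact ⟨_, rfl⟩
    · rintro g ⟨y, rfl⟩; exact ⟨unit y, ⟨y, rfl⟩, rfl⟩
  | n + 1 => by
    apply Set.Subset.antisymm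
    · rintro g ⟨g', _, rfl⟩; cases g' <;> exact ⟨_, rfl⟩
    · rintro g ⟨y, rfl⟩
      by_cases hy : y ∈ C n
      · exact ⟨arr n y hy, Or.inr ⟨y, hy, rfl⟩, rfl⟩
      · exact ⟨unit y, Or.inl ⟨y, hy, rfl⟩, rfl⟩

theorem injOn_rmap_Bset : ∀ n, Set.InjOn (rmap : Gt C → Gt C) (Bset C n)
  | 0 => by
    rintro _ ⟨a, rfl⟩ _ ⟨b, rfl⟩ h
    simpa [rmap] using h
  | n + 1 => by
    rintro g (⟨a, ha, rfl⟩ | ⟨a, ha, rfl⟩) g' (⟨b, hb, rfl⟩ | ⟨b, hb, rfl⟩) h <;>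
      simp only [rmap, unit.injEq] at h <;> subst h
    · rfl
    · exact absurd hb ha
    · exact absurd ha hb
    · rfl

theorem isOpen_rmap_image_Bset :
    ∀ n, ∀ U ⊆ Bset C n, IsOpen U → IsOpen (rmap '' (U : Set (Gt C)))
  | 0 => by
    intro U hUB hU
    have : rmap '' U = U := by
      apply Set.Subset.antisymm
      · rintro g ⟨g', hg', rfl⟩
        obtain ⟨y, rfl⟩ := hUB hg'
        exact hg'
      · intro g hg
        obtain ⟨y, rfl⟩ := hUB hg
        exact ⟨unit y, hg, rfl⟩
    rwa [this]
  | n + 1 => by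
    intro U hUB hU
    rw [isOpen_iff] at hU ⊢
    constructor
    · rintro x ⟨g, hgU, hg⟩
      match g, hg with
      | .unit y, hg =>
        cases unit_injective hg
        obtain ⟨V, hV, hxV, hVU⟩ := hU.1 x hgU
        exact ⟨V, hV, hxV, fun z hz => ⟨unit z, hVU z hz, rfl⟩⟩
      | .arr m y hy, hg =>
        have h1 : y = x := unit_injective hg
        subst h1
        obtain ⟨V, hV, hxV, hP1, hP2⟩ := hU.2 m y hy hgU
        refine ⟨V, hV, hxV, fun z hz => ?_⟩
        by_cases hzC : z ∈ C m
        · exact ⟨arr m z hzC, hP2 z hzC hz, rfl⟩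
        · exact ⟨unit z, hP1 z hz hzC, rfl⟩
    · rintro m x h ⟨g, _, hg⟩
      cases g <;> exact absurd hg (by simp [rmap])

theorem iUnion_Bset : ⋃ n, Bset C n = (Set.univ : Set (Gt C)) := by
  apply Set.eq_univ_of_forall
  intro g
  match g with
  | .unit x => exact Set.mem_iUnion.2 ⟨0, ⟨x, rfl⟩⟩
  | .arr n x h => exact Set.mem_iUnion.2 ⟨n + 1, Or.inr ⟨x, h, rfl⟩⟩

theorem interior_compl_range (hCi : ∀ n, interior (C n) = ∅) :
    interior ((Set.range (unit : X → Gt C))ᶜ) = ∅ := by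
  rw [Set.eq_empty_iff_forall_notMem]
  intro g hg
  have hg' : g ∈ (Set.range (unit : X → Gt C))ᶜ := interior_subset hg
  match g with
  | .unit x => exact hg' ⟨x, rfl⟩
  | .arr n x h =>
    obtain ⟨U, hU, hxU, hP1, _⟩ :=
      (isOpen_iff.mp (isOpen_interior)).2 n x h hg
    have hsub : U ⊆ C n := by
      intro y hy
      by_contra hyn
      exact (interior_subset (hP1 y hy hyn)) ⟨y, rfl⟩
    have : x ∈ interior (C n) := mem_interior.2 ⟨U, hsub, hU, hxU⟩
    rw [hCi n] at this
    exact this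

end Bsets
end Gt


/-- If every topological groupoid whose unit space admits a compatible complete metric and
which has a countable cover by neighbourhood bisections satisfies "effective implies
topologically principal", then the Baire Category Theorem holds. -/
theorem baire_category_of_effective_implies_principal
    (H : ∀ (G : Type u) [TopologicalSpace G] (G0 : Set G) (r s : G → G),
      Continuous r → Continuous s →
      (∀ γ : G, r γ ∈ G0) → (∀ γ : G, s γ ∈ G0) →
      (∀ x ∈ G0, r x = x) → (∀ x ∈ G0, s x = x) →
      (∃ m : MetricSpace ↥G0,
        m.toUniformSpace.toTopologicalSpace = (inferInstance : TopologicalSpace ↥G0) ∧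
        @CompleteSpace ↥G0 m.toUniformSpace) →
      (∃ B : ℕ → Set G, (∀ n, IsNbhdBisection G0 r s (B n)) ∧ ⋃ n, B n = Set.univ) →
      interior ({γ : G | r γ = s γ} \ G0) = ∅ →
      interior {x : ↥G0 | ∃ γ : G, γ ∉ G0 ∧ r γ = ↑x ∧ s γ = ↑x} = ∅)
    (X : Type u) [MetricSpace X] [CompleteSpace X]
    (C : ℕ → Set X) (hC : ∀ n, IsClosed (C n)) (hCi : ∀ n, interior (C n) = ∅) :
    interior (⋃ n, C n) = ∅ := by
  classical
  set G0 : Set (Gt C) := Set.range Gt.unit with hG0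
  have hrange : ∀ γ : Gt C, Gt.rmap γ ∈ G0 := by
    intro γ; cases γ <;> exact ⟨_, rfl⟩
  have hfix : ∀ x ∈ G0, Gt.rmap x = x := by
    rintro _ ⟨y, rfl⟩; rfl
  have hNB : ∀ n, IsNbhdBisection G0 Gt.rmap Gt.rmap (Gt.Bset C n) := by
    intro n
    have hBo := Gt.isOpen_Bset hC n
    have hInt : interior (Gt.Bset C n) = Gt.Bset C n := hBo.interior_eq
    refine ⟨?_, Gt.injOn_rmap_Bset n, Gt.injOn_rmap_Bset n, ?_, ?_, ?_, ?_⟩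
    · rw [hInt]; exact subset_closure
    · rw [Gt.rmap_image_Bset n]; exact Gt.isOpen_range_unit
    · rw [Gt.rmap_image_Bset n]; exact Gt.isOpen_range_unit
    · rw [hInt]
      exact ⟨hBo, by rw [Gt.rmap_image_Bset n]; exact Gt.isOpen_range_unit,
        by rw [Gt.rmap_image_Bset n]; exact Gt.isOpen_range_unit,
        Gt.injOn_rmap_Bset n, Gt.injOn_rmap_Bset n,
        fun U hU hUo => Gt.isOpen_rmap_image_Bset n U hU hUo,
        fun U hU hUo => Gt.isOpen_rmap_image_Bset n U hU hUo⟩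
    · rw [hInt]; simp
  have hEff : interior ({γ : Gt C | Gt.rmap γ = Gt.rmap γ} \ G0) = ∅ := by
    have hs : ({γ : Gt C | Gt.rmap γ = Gt.rmap γ} \ G0) = G0ᶜ := by
      ext g; simp [Set.mem_diff]
    rw [hs, hG0]
    exact Gt.interior_compl_range hCi
  have key := H (Gt C) G0 Gt.rmap Gt.rmap Gt.continuous_rmap Gt.continuous_rmap
    hrange hrange hfix hfix (Gt.exists_metric C) ⟨Gt.Bset C, hNB, Gt.iUnion_Bset⟩ hEff
  rw [Set.eq_empty_iff_forall_notMem]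
  intro x hx
  have hW : IsOpen ((Subtype.val : ↥G0 → Gt C) ⁻¹' (Gt.unit '' interior (⋃ n, C n))) :=
    (Gt.isOpenMap_unit _ isOpen_interior).preimage continuous_subtype_val
  have hWT : ((Subtype.val : ↥G0 → Gt C) ⁻¹' (Gt.unit '' interior (⋃ n, C n))) ⊆
      {p : ↥G0 | ∃ γ : Gt C, γ ∉ G0 ∧ Gt.rmap γ = ↑p ∧ Gt.rmap γ = ↑p} := by
    rintro ⟨g, hg⟩ ⟨y, hy, hyg⟩
    obtain ⟨n, hn⟩ := Set.mem_iUnion.1 (interior_subset hy)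
    refine ⟨Gt.arr n y hn, ?_, hyg, hyg⟩
    rintro ⟨z, hz⟩
    cases hz
  have hp : (⟨Gt.unit x, ⟨x, rfl⟩⟩ : ↥G0) ∈
      interior {p : ↥G0 | ∃ γ : Gt C, γ ∉ G0 ∧ Gt.rmap γ = ↑p ∧ Gt.rmap γ = ↑p} :=
    mem_interior.2 ⟨_, hWT, hW, ⟨x, hx, rfl⟩⟩
  rw [key] at hp
  exact hp
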